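/- Let n ≥ 1 and let g be an invertible symmetric n×n real matrix. Let A : ℝ → Matrix(n,n,ℝ) be a family of matrices with A(τ)ᵀ g = g A(τ) for all τ (each A(τ) is self-adjoint with respect to the bilinear form defined by g). Let S_k : ℝ → Matrix(n,n,ℝ), k = 0, 1, 2, …, be differentiable functions with S₀ ≡ 1 (the identity matrix) and S_k′(τ) = A(τ)·S_{k−1}(τ) for all k ≥ 1 and all τ (the coefficientwise form of the calibration equation z ∂_τ S = A S for S(z,τ) = 1 + S₁(τ)z⁻¹ + S₂(τ)z⁻² + ⋯). Then, for every k ≥ 1, the function τ ↦ ∑_{i=0}^{k} (−1)^i S_i(τ)ᵀ g S_{k−i}(τ) is constant on ℝ. In particular, if S_k(0) = 0 for all k ≥ 1, then ∑_{i=0}^{k} (−1)^i S_i(τ)ᵀ g S_{k−i}(τ) = 0 for all τ and all k ≥ 1; that is, S satisfies the twisted loop group condition S^*(−z) S(z) = 1. -/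

import Mathlib

open Matrix
/-- Propagation of the twisted-loop-group (unitarity) condition
along the calibration equation. If `g` is an invertible symmetric matrix,
`A(τ)` is `g`-self-adjoint, `S₀ ≡ 1` and `S_k' = A·S_{k−1}` (entrywise
derivatives), then `τ ↦ ∑_{i=0}^k (−1)^i S_i(τ)ᵀ g S_{k−i}(τ)` is constant for
every `k ≥ 1`; in particular if `S_k(0) = 0` for `k ≥ 1` then these sums vanish
identically, i.e. `S*(−z)S(z) = 1`. -/
theorem calibration_unitarity
    {n : ℕ} (hn : 1 ≤ n) (g : Matrix (Fin n) (Fin n) ℝ)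
    (hg : IsUnit g) (hgsymm : gᵀ = g)
    (A : ℝ → Matrix (Fin n) (Fin n) ℝ)
    (hA : ∀ τ : ℝ, (A τ)ᵀ * g = g * A τ)
    (S : ℕ → ℝ → Matrix (Fin n) (Fin n) ℝ)
    (hS0 : ∀ τ : ℝ, S 0 τ = 1)
    (hS : ∀ k : ℕ, 1 ≤ k → ∀ τ : ℝ, ∀ i j : Fin n,
      HasDerivAt (fun t => S k t i j) ((A τ * S (k - 1) τ) i j) τ) :
    (∀ k : ℕ, 1 ≤ k → ∀ τ₁ τ₂ : ℝ,
        ∑ i ∈ Finset.range (k + 1), (-1 : ℝ) ^ i • ((S i τ₁)ᵀ * g * S (k - i) τ₁)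
          = ∑ i ∈ Finset.range (k + 1), (-1 : ℝ) ^ i • ((S i τ₂)ᵀ * g * S (k - i) τ₂)) ∧
    ((∀ k : ℕ, 1 ≤ k → S k 0 = 0) →
      ∀ k : ℕ, 1 ≤ k → ∀ τ : ℝ,
        ∑ i ∈ Finset.range (k + 1), (-1 : ℝ) ^ i • ((S i τ)ᵀ * g * S (k - i) τ) = 0) := by
  -- entrywise derivatives of each S_i, valid for all i (including i = 0)
  have hd : ∀ τ : ℝ, ∀ i : ℕ, ∀ a b : Fin n,
      HasDerivAt (fun t => S i t a b)
        ((if i = 0 then (0 : Matrix (Fin n) (Fin n) ℝ) else A τ * S (i - 1) τ) a b) τ := by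
    intro τ i a b
    rcases Nat.eq_zero_or_pos i with h0 | h1
    · subst h0
      simp only [if_pos rfl, Matrix.zero_apply]
      have he : (fun t => S 0 t a b) = fun _ : ℝ => (1 : Matrix (Fin n) (Fin n) ℝ) a b := by
        funext t; rw [hS0]
      rw [he]; exact hasDerivAt_const _ _
    · simp only [if_neg (Nat.pos_iff_ne_zero.mp h1)]
      exact hS i h1 τ a b
  have hderiv : ∀ k : ℕ, 1 ≤ k → ∀ p q : Fin n, ∀ τ : ℝ,
      HasDerivAt (fun t =>
        ∑ i ∈ Finset.range (k + 1), (-1 : ℝ) ^ i * (((S i t)ᵀ * g * S (k - i) t) p q)) 0 τ := by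
    intro k hk p q τ
    set D : ℕ → Matrix (Fin n) (Fin n) ℝ :=
      fun i => if i = 0 then 0 else A τ * S (i - 1) τ with hD
    have hterm : ∀ i : ℕ,
        HasDerivAt (fun t => ((S i t)ᵀ * g * S (k - i) t) p q)
          (((D i)ᵀ * g * S (k - i) τ + (S i τ)ᵀ * g * D (k - i)) p q) τ := by
      intro i
      have h1 : ∀ b : Fin n, HasDerivAt (fun t => ((S i t)ᵀ * g) p b) (((D i)ᵀ * g) p b) τ := by
        intro b
        simp only [Matrix.mul_apply, Matrix.transpose_apply]
        exact HasDerivAt.fun_sum fun a _ => (hd τ i a p).mul_const (g a b)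
      have h2 : HasDerivAt (fun t => ∑ b, ((S i t)ᵀ * g) p b * S (k - i) t b q)
          (∑ b, (((D i)ᵀ * g) p b * S (k - i) τ b q + ((S i τ)ᵀ * g) p b * D (k - i) b q)) τ :=
        HasDerivAt.fun_sum fun b _ => (h1 b).mul (hd τ (k - i) b q)
      have hf : (fun t => ((S i t)ᵀ * g * S (k - i) t) p q)
          = fun t => ∑ b, ((S i t)ᵀ * g) p b * S (k - i) t b q := by
        funext t; rw [Matrix.mul_apply]
      have hv : (((D i)ᵀ * g * S (k - i) τ + (S i τ)ᵀ * g * D (k - i)) p q)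
          = ∑ b, (((D i)ᵀ * g) p b * S (k - i) τ b q + ((S i τ)ᵀ * g) p b * D (k - i) b q) := by
        rw [Matrix.add_apply, Matrix.mul_apply, Matrix.mul_apply, Finset.sum_add_distrib]
      rw [hf, hv]; exact h2
    have hzero : ∑ i ∈ Finset.range (k + 1),
        (-1 : ℝ) ^ i • ((D i)ᵀ * g * S (k - i) τ + (S i τ)ᵀ * g * D (k - i)) = 0 := by
      have split : ∑ i ∈ Finset.range (k + 1),
          (-1 : ℝ) ^ i • ((D i)ᵀ * g * S (k - i) τ + (S i τ)ᵀ * g * D (k - i))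
          = (∑ i ∈ Finset.range (k + 1), (-1 : ℝ) ^ i • ((D i)ᵀ * g * S (k - i) τ))
          + ∑ i ∈ Finset.range (k + 1), (-1 : ℝ) ^ i • ((S i τ)ᵀ * g * D (k - i)) := by
        rw [← Finset.sum_add_distrib]
        exact Finset.sum_congr rfl fun i _ => smul_add _ _ _
      have e1 : ∑ i ∈ Finset.range (k + 1), (-1 : ℝ) ^ i • ((D i)ᵀ * g * S (k - i) τ)
          = ∑ i ∈ Finset.range k, (-1 : ℝ) ^ (i + 1) • ((A τ * S i τ)ᵀ * g * S (k - (i + 1)) τ) := by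
        rw [Finset.sum_range_succ']
        simp [hD]
      have e2 : ∑ i ∈ Finset.range (k + 1), (-1 : ℝ) ^ i • ((S i τ)ᵀ * g * D (k - i))
          = ∑ i ∈ Finset.range k, (-1 : ℝ) ^ i • ((S i τ)ᵀ * g * (A τ * S (k - (i + 1)) τ)) := by
        rw [Finset.sum_range_succ]
        have hlast : D (k - k) = 0 := by simp [hD]
        rw [hlast]
        simp only [mul_zero, smul_zero, add_zero]
        refine Finset.sum_congr rfl fun i hi => ?_
        have hik : i < k := Finset.mem_range.mp hi
        have hne : k - i ≠ 0 := Nat.sub_ne_zero_of_lt hik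
        have : D (k - i) = A τ * S (k - i - 1) τ := by simp [hD, hne]
        rw [this, Nat.sub_sub]
      rw [split, e1, e2, ← Finset.sum_add_distrib]
      refine Finset.sum_eq_zero fun i hi => ?_
      have hmm : (A τ * S i τ)ᵀ * g * S (k - (i + 1)) τ
          = (S i τ)ᵀ * g * (A τ * S (k - (i + 1)) τ) := by
        rw [Matrix.transpose_mul, mul_assoc (S i τ)ᵀ (A τ)ᵀ g, hA,
          ← mul_assoc (S i τ)ᵀ g (A τ), mul_assoc ((S i τ)ᵀ * g) (A τ)]
      rw [hmm, pow_succ, mul_comm ((-1 : ℝ) ^ i) (-1), neg_one_mul, neg_smul, neg_add_cancel]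
    have hfinal := HasDerivAt.fun_sum
      (fun i (_ : i ∈ Finset.range (k + 1)) => (hterm i).const_mul ((-1 : ℝ) ^ i))
    have hval : ∑ i ∈ Finset.range (k + 1),
        (-1 : ℝ) ^ i * (((D i)ᵀ * g * S (k - i) τ + (S i τ)ᵀ * g * D (k - i)) p q) = 0 := by
      have := congrFun (congrFun hzero p) q
      simpa [Matrix.sum_apply, Matrix.add_apply, Matrix.smul_apply, smul_eq_mul, mul_add,
        Finset.sum_add_distrib] using this
    rw [← hval]; exact hfinal
  have const : ∀ k : ℕ, 1 ≤ k → ∀ τ₁ τ₂ : ℝ,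
      ∑ i ∈ Finset.range (k + 1), (-1 : ℝ) ^ i • ((S i τ₁)ᵀ * g * S (k - i) τ₁)
        = ∑ i ∈ Finset.range (k + 1), (-1 : ℝ) ^ i • ((S i τ₂)ᵀ * g * S (k - i) τ₂) := by
    intro k hk τ₁ τ₂
    ext p q
    simp only [Matrix.sum_apply, Matrix.smul_apply, smul_eq_mul]
    exact is_const_of_deriv_eq_zero
      (fun t => ((hderiv k hk p q t).differentiableAt))
      (fun t => (hderiv k hk p q t).deriv) τ₁ τ₂
  refine ⟨const, ?_⟩
  intro h0 k hk τ
  rw [const k hk τ 0]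
  refine Finset.sum_eq_zero fun i hi => ?_
  rcases Nat.eq_zero_or_pos i with h | h
  · subst h
    rw [Nat.sub_zero, h0 k hk, mul_zero, smul_zero]
  · rw [h0 i h, Matrix.transpose_zero, zero_mul, zero_mul, smul_zero]
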